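/- Let X and Y be Banach spaces. If a bounded bilinear form B ∈ B(X×Y) = (X⊗̂_πY)* attains its norm as a functional at some element of INA_π(X⊗̂_πY), i.e. there exists u ∈ INA_π(X⊗̂_πY) with ‖u‖_π = 1 and |B(u)| = ‖B‖, then B is a norm-attaining bilinear form, i.e. B ∈ NA(X×Y). -/

import Mathlib

open MeasureTheory Metric Set Filter TopologicalSpace

noncomputable section

variable {𝕜 : Type*} [RCLike 𝕜]
variable {X : Type*} [NormedAddCommGroup X] [NormedSpace 𝕜 X]
variable {Y : Type*} [NormedAddCommGroup Y] [NormedSpace 𝕜 Y]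
variable {T : Type*} [NormedAddCommGroup T] [NormedSpace 𝕜 T]
variable [NormedSpace ℝ T] [IsScalarTower ℝ 𝕜 T]

/-- `T`, together with the continuous bilinear map `tmul`, is a realization of the
projective tensor product `X ⊗̂_π Y`: it is complete, the span of elementary tensors
`x ⊗ y = tmul x y` is dense, and on that span the norm is the projective norm. -/
structure IsProjTensor (tmul : X →L[𝕜] Y →L[𝕜] T) : Prop where
  complete : CompleteSpace T
  dense_span :
    Dense ((Submodule.span 𝕜 (Set.range fun p : X × Y => tmul p.1 p.2) : Submodule 𝕜 T) : Set T)
  norm_eq : ∀ z : T,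
    z ∈ Submodule.span 𝕜 (Set.range fun p : X × Y => tmul p.1 p.2) →
    ‖z‖ = sInf { c : ℝ | ∃ (m : ℕ) (x : Fin m → X) (y : Fin m → Y),
      z = ∑ i, tmul (x i) (y i) ∧ c = ∑ i, ‖x i‖ * ‖y i‖ }

/-- `u` attains its projective norm (`u ∈ NA_π(X ⊗̂_π Y)`): it admits a representation
`u = ∑ λ_n x_n ⊗ y_n` with `x_n ∈ B_X`, `y_n ∈ B_Y`, `λ_n ≥ 0` and `∑ λ_n = ‖u‖_π`. -/
def NApi (tmul : X →L[𝕜] Y →L[𝕜] T) (u : T) : Prop :=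
  ∃ (x : ℕ → X) (y : ℕ → Y) (l : ℕ → ℝ),
    (∀ n, ‖x n‖ ≤ 1) ∧ (∀ n, ‖y n‖ ≤ 1) ∧ (∀ n, 0 ≤ l n) ∧
    HasSum (fun n => (l n : 𝕜) • tmul (x n) (y n)) u ∧ HasSum l ‖u‖

/-- `u` is finitely norm-attaining (`u ∈ FNA_π(X ⊗̂_π Y)`): it admits a finite optimal
representation `u = ∑_{k<m} x_k ⊗ y_k` with `∑_{k<m} ‖x_k‖‖y_k‖ = ‖u‖_π`. -/
def FNApi (tmul : X →L[𝕜] Y →L[𝕜] T) (u : T) : Prop :=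
  ∃ (m : ℕ) (x : Fin m → X) (y : Fin m → Y),
    u = ∑ i, tmul (x i) (y i) ∧ ∑ i, ‖x i‖ * ‖y i‖ = ‖u‖

/-- `u` is an integral projective norm-attaining tensor witnessed by `μ`: `μ` is a finite
positive Borel measure concentrated on `B_X × B_Y`, the map `(x, y) ↦ x ⊗ y` is
`μ`-Bochner integrable, `u = ∫ x ⊗ y ∂μ` and `‖μ‖ = ‖u‖_π`. -/
def INApiWitness [MeasurableSpace X] [MeasurableSpace Y]
    (tmul : X →L[𝕜] Y →L[𝕜] T) (u : T) (μ : Measure (X × Y)) : Prop :=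
  IsFiniteMeasure μ ∧
  μ ((closedBall (0 : X) 1 ×ˢ closedBall (0 : Y) 1)ᶜ) = 0 ∧
  Integrable (fun p : X × Y => tmul p.1 p.2) μ ∧
  u = ∫ p, tmul p.1 p.2 ∂μ ∧
  (μ Set.univ).toReal = ‖u‖

/-- `u ∈ INA_π(X ⊗̂_π Y)`: `u` is an integral projective norm-attaining tensor. -/
def INApi [MeasurableSpace X] [MeasurableSpace Y]
    (tmul : X →L[𝕜] Y →L[𝕜] T) (u : T) : Prop :=
  ∃ μ : Measure (X × Y), INApiWitness tmul u μ


/-- Corollary 2.6: a bilinear form attaining its norm (as a functional on the projective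
tensor product) at an integral projective norm-attaining tensor is norm-attaining. -/
theorem stmt_3 [CompleteSpace X] [CompleteSpace Y]
    [MeasurableSpace X] [BorelSpace X] [MeasurableSpace Y] [BorelSpace Y]
    (tmul : X →L[𝕜] Y →L[𝕜] T) (hT : IsProjTensor tmul)
    (B : T →L[𝕜] 𝕜) (u : T) (hu : INApi tmul u) (hu1 : ‖u‖ = 1)
    (hB : ‖B u‖ = ‖B‖) :
    ∃ (x : X) (y : Y), ‖x‖ = 1 ∧ ‖y‖ = 1 ∧ ‖B (tmul x y)‖ = ‖B‖ := by
  obtain ⟨μ, hμfin, hμball, hint, hu_eq, hμnorm⟩ := hu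
  haveI := hμfin
  -- projective norm bound on elementary tensors
  have htle : ∀ (x : X) (y : Y), ‖tmul x y‖ ≤ ‖x‖ * ‖y‖ := by
    intro x y
    have hmem : tmul x y ∈ Submodule.span 𝕜 (Set.range fun p : X × Y => tmul p.1 p.2) :=
      Submodule.subset_span ⟨(x, y), rfl⟩
    rw [hT.norm_eq _ hmem]
    apply csInf_le
    · refine ⟨0, ?_⟩
      rintro c ⟨m, xs, ys, -, rfl⟩
      exact Finset.sum_nonneg fun i _ => mul_nonneg (norm_nonneg _) (norm_nonneg _)
    · exact ⟨1, ![x], ![y], by simp, by simp⟩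
  by_cases hB0 : ‖B‖ = 0
  · -- the zero form: just need unit vectors
    have hB' : B = 0 := norm_eq_zero.mp hB0
    have hne : ∃ (x : X) (y : Y), tmul x y ≠ (0 : T) := by
      by_contra h
      push_neg at h
      have hspan : (Submodule.span 𝕜 (Set.range fun p : X × Y => tmul p.1 p.2)) = ⊥ := by
        rw [Submodule.span_eq_bot]
        rintro _ ⟨p, rfl⟩
        exact h p.1 p.2
      have hd := hT.dense_span
      rw [hspan] at hd
      have hu0 : u ∈ closure ((⊥ : Submodule 𝕜 T) : Set T) := hd.closure_eq ▸ Set.mem_univ u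
      rw [Submodule.bot_coe, IsClosed.closure_eq isClosed_singleton] at hu0
      rw [Set.mem_singleton_iff] at hu0
      rw [hu0] at hu1
      simp at hu1
    obtain ⟨x, y, hxy⟩ := hne
    have hx : x ≠ 0 := fun h => hxy (by simp [h])
    have hy : y ≠ 0 := fun h => hxy (by simp [h])
    refine ⟨((‖x‖⁻¹ : ℝ) : 𝕜) • x, ((‖y‖⁻¹ : ℝ) : 𝕜) • y, ?_, ?_, ?_⟩
    · rw [norm_smul, RCLike.norm_ofReal, abs_of_nonneg (by positivity)]
      exact inv_mul_cancel₀ (norm_ne_zero_iff.2 hx)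
    · rw [norm_smul, RCLike.norm_ofReal, abs_of_nonneg (by positivity)]
      exact inv_mul_cancel₀ (norm_ne_zero_iff.2 hy)
    · simp [hB', hB0]
  · -- main case: ‖B‖ > 0
    have hBpos : 0 < ‖B‖ := lt_of_le_of_ne (norm_nonneg _) (Ne.symm hB0)
    set f : X × Y → 𝕜 := fun p => B (tmul p.1 p.2) with hf
    have hintf : Integrable f μ := B.integrable_comp hint
    haveI : CompleteSpace T := hT.complete
    have hBu : B u = ∫ p, f p ∂μ := by
      rw [hu_eq, ContinuousLinearMap.integral_comp_comm B hint]
    have hμu : μ ≠ 0 := by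
      intro h
      rw [h] at hμnorm
      rw [hu1] at hμnorm
      simp at hμnorm
    haveI : NeBot (ae μ) := ae_neBot.2 hμu
    have hae : ∀ᵐ p ∂μ, p ∈ closedBall (0 : X) 1 ×ˢ closedBall (0 : Y) 1 := by
      rw [ae_iff]
      exact hμball
    have hbound : ∀ᵐ p ∂μ, ‖f p‖ ≤ ‖B‖ := by
      refine hae.mono fun p hp => ?_
      obtain ⟨hx, hy⟩ := hp
      rw [mem_closedBall_zero_iff] at hx hy
      calc ‖f p‖ ≤ ‖B‖ * ‖tmul p.1 p.2‖ := B.le_opNorm _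
        _ ≤ ‖B‖ * (‖p.1‖ * ‖p.2‖) := by
            exact mul_le_mul_of_nonneg_left (htle _ _) (norm_nonneg _)
        _ ≤ ‖B‖ * (1 * 1) := by
            apply mul_le_mul_of_nonneg_left _ (norm_nonneg _)
            exact mul_le_mul hx hy (norm_nonneg _) zero_le_one
        _ = ‖B‖ := by ring
    have hμ1 : (μ Set.univ).toReal = 1 := by rw [hμnorm, hu1]
    have hint_norm : ∫ p, ‖f p‖ ∂μ ≤ ‖B‖ := by
      calc ∫ p, ‖f p‖ ∂μ ≤ ∫ _, ‖B‖ ∂μ :=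
            integral_mono_ae hintf.norm (integrable_const _) hbound
        _ = (μ Set.univ).toReal * ‖B‖ := by rw [integral_const, smul_eq_mul]; rfl
        _ = ‖B‖ := by rw [hμ1, one_mul]
    have hge : ‖B‖ ≤ ∫ p, ‖f p‖ ∂μ := by
      calc ‖B‖ = ‖B u‖ := hB.symm
        _ = ‖∫ p, f p ∂μ‖ := by rw [hBu]
        _ ≤ ∫ p, ‖f p‖ ∂μ := norm_integral_le_integral_norm _
    have heq : ∫ p, ‖f p‖ ∂μ = ‖B‖ := le_antisymm hint_norm hge
    -- equality a.e.
    have hg_int : Integrable (fun p => ‖B‖ - ‖f p‖) μ :=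
      (integrable_const _).sub hintf.norm
    have hg_nonneg : 0 ≤ᵐ[μ] fun p => ‖B‖ - ‖f p‖ :=
      hbound.mono fun p hp => by simpa using hp
    have hg_zero : ∫ p, (‖B‖ - ‖f p‖) ∂μ = 0 := by
      rw [integral_sub (integrable_const _) hintf.norm, heq, integral_const, smul_eq_mul]
      change (μ Set.univ).toReal * ‖B‖ - ‖B‖ = 0
      rw [hμ1, one_mul, sub_self]
    have hae_eq : ∀ᵐ p ∂μ, ‖f p‖ = ‖B‖ := by
      have := (integral_eq_zero_iff_of_nonneg_ae hg_nonneg hg_int).1 hg_zero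
      filter_upwards [this] with p hp
      have : ‖B‖ - ‖f p‖ = 0 := hp
      linarith
    obtain ⟨p, hpball, hpeq⟩ := (hae.and hae_eq).exists
    obtain ⟨hx, hy⟩ := hpball
    rw [mem_closedBall_zero_iff] at hx hy
    have hle : ‖B‖ ≤ ‖B‖ * (‖p.1‖ * ‖p.2‖) := by
      calc ‖B‖ = ‖f p‖ := hpeq.symm
        _ ≤ ‖B‖ * ‖tmul p.1 p.2‖ := B.le_opNorm _
        _ ≤ ‖B‖ * (‖p.1‖ * ‖p.2‖) :=
            mul_le_mul_of_nonneg_left (htle _ _) (norm_nonneg _)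
    have h1 : 1 ≤ ‖p.1‖ * ‖p.2‖ := by
      by_contra h
      push_neg at h
      nlinarith
    have hx1 : ‖p.1‖ = 1 := by
      have := norm_nonneg p.1
      have := norm_nonneg p.2
      nlinarith
    have hy1 : ‖p.2‖ = 1 := by
      have := norm_nonneg p.1
      have := norm_nonneg p.2
      nlinarith
    exact ⟨p.1, p.2, hx1, hy1, hpeq⟩
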